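/- Let c ∈ A be an idempotent with (c,c) = 1. Then c is an axis (a primitive axis of Jordan type 1/2, i.e. A = Fc ⊕ A_0(c) ⊕ A_{1/2}(c) and the fusion rules hold) if and only if P_c(x,y) = 0 for all x, y ∈ A. -/

import Mathlib

/-- `A_0(z)`: the set of elements `x` with `z * x = 0`. -/
def A0 (F : Type*) {A : Type*} [Field F] [NonUnitalNonAssocCommRing A] [Module F A]
    (z : A) : Set A :=
  {x | z * x = 0}

/-- `A_{1/2}(z)`: the set of elements `x` with `z * x = (1/2) • x`. -/
def Ahalf (F : Type*) {A : Type*} [Field F] [NonUnitalNonAssocCommRing A] [Module F A]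
    (z : A) : Set A :=
  {x | z * x = (1/2 : F) • x}

/-- `w0` is the `A_0(a)`-component of `w` in the decomposition
`A = F•a ⊕ A_0(a) ⊕ A_{1/2}(a)`. -/
def IsZeroPart (F : Type*) {A : Type*} [Field F] [NonUnitalNonAssocCommRing A] [Module F A]
    (a w w0 : A) : Prop :=
  w0 ∈ A0 F a ∧ ∃ (α : F) (wh : A), wh ∈ Ahalf F a ∧ w = α • a + w0 + wh

variable {F A : Type*} [Field F] [NonUnitalNonAssocCommRing A] [Module F A]
  [SMulCommClass F A A] [IsScalarTower F A A]

/-- `c` is a primitive axis of Jordan type `1/2` with respect to the Frobenius form `B`: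
`c` is an idempotent of norm `1`, `A = F•c ⊕ A_0(c) ⊕ A_{1/2}(c)` as an internal direct
sum of `F`-subspaces, and the fusion rules hold. -/
structure IsAxis (B : A →ₗ[F] A →ₗ[F] F) (c : A) : Prop where
  idem : c * c = c
  norm : B c c = 1
  decomp : ∀ x : A, ∃ (α : F) (x0 : A), x0 ∈ A0 F c ∧ ∃ xh ∈ Ahalf F c, x = α • c + x0 + xh
  indep : ∀ (α : F) (x0 xh : A), x0 ∈ A0 F c → xh ∈ Ahalf F c →
      α • c + x0 + xh = 0 → α = 0 ∧ x0 = 0 ∧ xh = 0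
  fusion00 : ∀ x ∈ A0 F c, ∀ y ∈ A0 F c, x * y ∈ A0 F c
  fusion0h : ∀ x ∈ A0 F c, ∀ y ∈ Ahalf F c, x * y ∈ Ahalf F c
  fusionhh : ∀ x ∈ Ahalf F c, ∀ y ∈ Ahalf F c, ∃ (α : F) (z : A), z ∈ A0 F c ∧ x * y = α • c + z

set_option linter.unusedSectionVars false

/-- The expression `P_c(x,y)`. -/
def Pc (B : A →ₗ[F] A →ₗ[F] F) (c x y : A) : A :=
  (4 : F) • ((c * x) * (c * y)) - B c y • (c * x) - (c * y) * x
    - B c x • (c * y) - (c * x) * y - B c (x * y) • c + c * (x * y)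

lemma Pc_add_left (B : A →ₗ[F] A →ₗ[F] F) (c x x' y : A) :
    Pc B c (x + x') y = Pc B c x y + Pc B c x' y := by
  simp only [Pc, mul_add, add_mul, map_add, add_smul, smul_add, LinearMap.add_apply]
  abel

lemma Pc_smul_left (B : A →ₗ[F] A →ₗ[F] F) (c : A) (α : F) (x y : A) :
    Pc B c (α • x) y = α • Pc B c x y := by
  simp only [Pc, mul_smul_comm, smul_mul_assoc, map_smul, smul_eq_mul, LinearMap.smul_apply]
  match_scalars <;> ring

lemma Pc_comm (B : A →ₗ[F] A →ₗ[F] F) (c x y : A) : Pc B c x y = Pc B c y x := by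
  simp only [Pc, mul_comm y x, mul_comm (c * y) (c * x)]
  abel

lemma Pc_add_right (B : A →ₗ[F] A →ₗ[F] F) (c x y y' : A) :
    Pc B c x (y + y') = Pc B c x y + Pc B c x y' := by
  rw [Pc_comm, Pc_add_left, Pc_comm B c y x, Pc_comm B c y' x]

lemma Pc_smul_right (B : A →ₗ[F] A →ₗ[F] F) (c : A) (β : F) (x y : A) :
    Pc B c x (β • y) = β • Pc B c x y := by
  rw [Pc_comm, Pc_smul_left, Pc_comm]

section
variable (B : A →ₗ[F] A →ₗ[F] F)
  (hsymm : ∀ x y : A, B x y = B y x)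
  (hfrob : ∀ x y z : A, B (x * y) z = B x (y * z))
  (h2 : (2 : F) ≠ 0)
  (c : A) (hidem : c * c = c) (hnorm : B c c = 1)

include hfrob hidem in
lemma B_of_A0 {x : A} (hx : c * x = 0) : B c x = 0 := by
  have h := hfrob c c x
  rw [hidem] at h
  rw [h, hx, map_zero]

include hfrob h2 hidem in
lemma B_of_Ahalf {x : A} (hx : c * x = (1/2 : F) • x) : B c x = 0 := by
  have h := hfrob c c x
  rw [hidem, hx, map_smul, smul_eq_mul] at h
  field_simp at h
  linear_combination h

include hfrob hidem in
lemma B_prod0 {x : A} (hx : c * x = 0) (y : A) : B c (x * y) = 0 := by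
  rw [← hfrob c x y, hx]
  simp

include hidem hnorm in
lemma Pc_cc : Pc B c c c = 0 := by
  simp only [Pc, hidem, hnorm, one_smul]
  match_scalars <;> ring

include hfrob hsymm hidem in
lemma Pc_c0 {y : A} (hy : c * y = 0) : Pc B c c y = 0 := by
  simp only [Pc, hidem, hy, mul_zero, zero_mul, smul_zero, map_zero, zero_smul,
    B_of_A0 B hfrob c hidem hy]
  abel

include hfrob hsymm h2 hidem hnorm in
lemma Pc_ch {y : A} (hy : c * y = (1/2 : F) • y) : Pc B c c y = 0 := by
  have hb := B_of_Ahalf B hfrob h2 c hidem hy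
  simp only [Pc, hidem, hy, hnorm, hb, zero_smul, mul_smul_comm, smul_mul_assoc, map_smul,
    smul_eq_mul, mul_comm y c]
  match_scalars <;> (field_simp; try ring)

include hfrob hidem in
lemma Pc_00 {x y : A} (hx : c * x = 0) (hy : c * y = 0) (hxy : c * (x * y) = 0) :
    Pc B c x y = 0 := by
  simp only [Pc, hx, hy, hxy, mul_zero, zero_mul, smul_zero, zero_smul,
    B_prod0 B hfrob c hidem hx y]
  abel

include hfrob h2 hidem in
lemma Pc_0h {x y : A} (hx : c * x = 0) (hy : c * y = (1/2 : F) • y)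
    (hxy : c * (x * y) = (1/2 : F) • (x * y)) : Pc B c x y = 0 := by
  simp only [Pc, hx, hy, hxy, mul_zero, zero_mul, smul_zero, zero_smul, smul_mul_assoc,
    B_prod0 B hfrob c hidem hx y, B_of_A0 B hfrob c hidem hx, mul_comm y x]
  match_scalars <;> (field_simp; try ring)

include hfrob h2 hidem hnorm in
lemma Pc_hh {x y : A} (hx : c * x = (1/2 : F) • x) (hy : c * y = (1/2 : F) • y)
    {α : F} {z : A} (hz : c * z = 0) (hxy : x * y = α • c + z) : Pc B c x y = 0 := by
  have hb : B c (x * y) = α := by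
    rw [hxy, map_add, map_smul, smul_eq_mul, hnorm, B_of_A0 B hfrob c hidem hz]
    ring
  have hcxy : c * (x * y) = α • c := by
    rw [hxy, mul_add, mul_smul_comm, hidem, hz, add_zero]
  have h4 : (4:F) ≠ 0 := by
    intro h
    exact h2 (by linear_combination (2:F)⁻¹ * h - 2 * (mul_inv_cancel₀ h2))
  simp only [Pc, hx, hy, hb, hcxy, smul_mul_assoc, mul_smul_comm,
    B_of_Ahalf B hfrob h2 c hidem hx, B_of_Ahalf B hfrob h2 c hidem hy, zero_smul,
    mul_comm y x]
  match_scalars <;> (field_simp; try ring)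

end

theorem statement1 (B : A →ₗ[F] A →ₗ[F] F)
    (hsymm : ∀ x y : A, B x y = B y x)
    (hfrob : ∀ x y z : A, B (x * y) z = B x (y * z))
    (h2 : (2 : F) ≠ 0)
    (c : A) (hidem : c * c = c) (hnorm : B c c = 1) :
    IsAxis B c ↔
      ∀ x y : A,
        (4 : F) • ((c * x) * (c * y)) - B c y • (c * x) - (c * y) * x
            - B c x • (c * y) - (c * x) * y - B c (x * y) • c + c * (x * y) = 0 := by
  have h21 : (2:F) * (1/2) = 1 := by field_simp
  have h4 : (4:F) ≠ 0 := by
    intro h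
    exact h2 (by linear_combination (2:F)⁻¹ * h - 2 * (mul_inv_cancel₀ h2))
  have hdb : ∀ w : A, (2:F) • ((1/2:F) • w) = w := fun w => by
    rw [smul_smul, h21, one_smul]
  constructor
  · -- forward direction
    intro hax x y
    show Pc B c x y = 0
    obtain ⟨α, x0, hx0, xh, hxh, hxe⟩ := hax.decomp x
    obtain ⟨β, y0, hy0, yh, hyh, hye⟩ := hax.decomp y
    have hx0' : c * x0 = 0 := hx0
    have hy0' : c * y0 = 0 := hy0
    have hxh' : c * xh = (1/2 : F) • xh := hxh
    have hyh' : c * yh = (1/2 : F) • yh := hyh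
    have f00 : c * (x0 * y0) = 0 := hax.fusion00 x0 hx0 y0 hy0
    have f0h : c * (x0 * yh) = (1/2:F) • (x0 * yh) := hax.fusion0h x0 hx0 yh hyh
    have fh0 : c * (y0 * xh) = (1/2:F) • (y0 * xh) := hax.fusion0h y0 hy0 xh hxh
    obtain ⟨γ, z, hz, hzz⟩ := hax.fusionhh xh hxh yh hyh
    have hz' : c * z = 0 := hz
    rw [hxe, hye]
    simp only [Pc_add_left, Pc_add_right, Pc_smul_left, Pc_smul_right,
      Pc_comm B c x0 c, Pc_comm B c xh c, Pc_comm B c xh y0,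
      Pc_cc B c hidem hnorm,
      Pc_c0 B hsymm hfrob c hidem hy0',
      Pc_c0 B hsymm hfrob c hidem hx0',
      Pc_ch B hsymm hfrob h2 c hidem hnorm hyh',
      Pc_ch B hsymm hfrob h2 c hidem hnorm hxh',
      Pc_00 B hfrob c hidem hx0' hy0' f00,
      Pc_0h B hfrob h2 c hidem hx0' hyh' f0h,
      Pc_0h B hfrob h2 c hidem hy0' hxh' fh0,
      Pc_hh B hfrob h2 c hidem hnorm hxh' hyh' hz' hzz]
    simp
  · -- reverse direction
    intro hP
    have hQ2 : ∀ x : A, (2:F) • (c * (c * x)) = c * x + (B c x) • c := by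
      intro x
      have h := hP x c
      rw [hidem, hnorm, one_smul, mul_comm x c] at h
      rw [mul_comm (c * x) c] at h
      have hb : B c (c * x) = B c x := by rw [← hfrob, hidem]
      rw [hb] at h
      apply smul_right_injective A h2
      linear_combination (norm := module) h
    refine ⟨hidem, hnorm, ?_, ?_, ?_, ?_, ?_⟩
    · -- decomposition
      intro x
      refine ⟨B c x, x - (B c x) • c - ((2:F) • (c * x) - ((2:F) * B c x) • c), ?_,
        (2:F) • (c * x) - ((2:F) * B c x) • c, ?_, by abel⟩
      · show c * _ = 0
        simp only [mul_sub, mul_smul_comm, hidem]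
        linear_combination (norm := module) (-1:F) • hQ2 x
      · show c * _ = (1/2 : F) • _
        apply smul_right_injective A h2
        beta_reduce
        rw [hdb]
        simp only [mul_sub, mul_smul_comm, hidem]
        linear_combination (norm := module) (2:F) • hQ2 x
    · -- independence
      intro α x0 xh hx0 hxh heq
      have hx0' : c * x0 = 0 := hx0
      have hxh' : c * xh = (1/2 : F) • xh := hxh
      have hc0 : c ≠ 0 := by
        intro h
        rw [h, map_zero] at hnorm
        exact one_ne_zero hnorm.symm
      have hxh2 : xh = (2:F) • (c * xh) := by
        rw [hxh', smul_smul, h21, one_smul]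
      have e1 : α • c + c * xh = 0 := by
        have h := congrArg (fun w => c * w) heq
        simpa only [mul_add, mul_smul_comm, hidem, hx0', add_zero, mul_zero] using h
      have e3 : c * xh = -(α • c) := eq_neg_of_add_eq_zero_right e1
      have hxhe : xh = (-((2:F) * α)) • c := by
        rw [hxh2, e3]
        module
      have hcxh2 : c * xh = (-((2:F) * α)) • c := by
        conv_lhs => rw [hxhe]
        rw [mul_smul_comm, hidem]
      have hαc : α • c = 0 := by
        have h6 : ((-((2:F) * α))) • c = ((-α) : F) • c := by rw [← hcxh2, e3, neg_smul]
        have h7 : ((-((2:F) * α)) - (-α) : F) • c = 0 := by rw [sub_smul, h6, sub_self]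
        have h8 : ((-((2:F) * α)) - (-α) : F) = -α := by ring
        rw [h8, neg_smul, neg_eq_zero] at h7
        exact h7
      have hα : α = 0 := by
        rcases smul_eq_zero.mp hαc with h | h
        · exact h
        · exact absurd h hc0
      have hxhz : xh = 0 := by rw [hxhe, hα]; simp
      refine ⟨hα, ?_, hxhz⟩
      rw [hα, hxhz] at heq
      simpa using heq
    · -- fusion 00
      intro x hx y hy
      have hx' : c * x = 0 := hx
      have hy' : c * y = 0 := hy
      show c * (x * y) = 0
      have h := hP x y
      rw [hx', hy', B_prod0 B hfrob c hidem hx' y] at h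
      simpa using h
    · -- fusion 0h
      intro x hx y hy
      have hx' : c * x = 0 := hx
      have hy2 : c * ((2:F) • y) = y := by
        rw [mul_smul_comm, show c * y = (1/2:F) • y from hy, smul_smul, h21, one_smul]
      show c * (x * y) = (1/2 : F) • (x * y)
      apply smul_right_injective A h2
      beta_reduce
      rw [hdb]
      have h := hP x ((2:F) • y)
      rw [hx', hy2] at h
      simp only [mul_smul_comm, map_smul, smul_eq_mul, zero_mul, mul_zero, smul_zero,
        B_prod0 B hfrob c hidem hx' y, B_of_A0 B hfrob c hidem hx', zero_smul,
        mul_comm y x] at h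
      linear_combination (norm := module) h
    · -- fusion hh
      intro x hx y hy
      have hx2 : c * ((2:F) • x) = x := by
        rw [mul_smul_comm, show c * x = (1/2:F) • x from hx, smul_smul, h21, one_smul]
      have hy2 : c * ((2:F) • y) = y := by
        rw [mul_smul_comm, show c * y = (1/2:F) • y from hy, smul_smul, h21, one_smul]
      have hbx : B c x = 0 := B_of_Ahalf B hfrob h2 c hidem hx
      have hby : B c y = 0 := B_of_Ahalf B hfrob h2 c hidem hy
      refine ⟨B c (x * y), x * y - (B c (x * y)) • c, ?_, by abel⟩
      show c * _ = 0
      have h := hP ((2:F) • x) ((2:F) • y)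
      rw [hx2, hy2] at h
      simp only [mul_smul_comm, smul_mul_assoc, smul_smul, map_smul, smul_eq_mul, hbx, hby,
        mul_zero, zero_smul, mul_comm y x] at h
      rw [mul_sub, mul_smul_comm, hidem]
      apply smul_right_injective A h4
      beta_reduce
      linear_combination (norm := module) h
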